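/- arXiv:2603.18136 — 3 statements merged into one kernel-verified Lean document; each statement's English description precedes it below -/
import Mathlib

section
/- Let Ω be the standard 2n×2n symplectic form matrix (block matrix [[0, I_n],[−I_n, 0]]), and let Σ be a real symmetric positive definite 2n×2n matrix satisfying the quantum covariance condition, i.e. Σ admits a Williamson decomposition Σ = S D Sᵀ with S symplectic (S Ω Sᵀ = Ω) and D diagonal with D ≥ I/2 (each diagonal entry at least 1/2). Then Σ⁻¹ ≤ 4 Ω Σ Ωᵀ in the Loewner order, and consequently ‖Σ⁻¹‖_op ≤ 4 ‖Σ‖_op. -/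
open Matrix

section AuxLemmas

open ContinuousLinearMap
open scoped RealInnerProductSpace

variable {E : Type*} [NormedAddCommGroup E] [InnerProductSpace ℝ E] [CompleteSpace E]

private lemma aux_cs {T : E →L[ℝ] E} (hT : T.IsPositive) (x y : E) :
    ⟪T x, y⟫ ^ 2 ≤ ⟪T x, x⟫ * ⟪T y, y⟫ := by
  have hsym := hT.isSelfAdjoint.isSymmetric
  have key : ∀ t : ℝ, 0 ≤ ⟪T x, x⟫ * (t * t) + (2 * ⟪T x, y⟫) * t + ⟪T y, y⟫ := by
    intro t
    have hTyx : ⟪T y, x⟫ = ⟪T x, y⟫ := by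
      exact (hsym y x).trans (real_inner_comm _ _)
    calc (0:ℝ) ≤ ⟪T (t • x + y), t • x + y⟫ := by
          simpa [reApplyInnerSelf] using hT.inner_nonneg_left (t • x + y)
      _ = ⟪T x, x⟫ * (t * t) + (2 * ⟪T x, y⟫) * t + ⟪T y, y⟫ := by
          simp only [map_add, _root_.map_smul, inner_add_left, inner_add_right,
            real_inner_smul_left, real_inner_smul_right, hTyx]
          ring
  have hd := discrim_le_zero key
  rw [discrim] at hd
  nlinarith [hd]

private lemma isPositive_norm_le {T U : E →L[ℝ] E} (hT : T.IsPositive)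
    (hUT : (U - T).IsPositive) : ‖T‖ ≤ ‖U‖ := by
  have hinner : ∀ x : E, ⟪T x, x⟫ ≤ ‖U‖ * (‖x‖ * ‖x‖) := by
    intro x
    have h1 := hUT.inner_nonneg_left x
    simp only [reApplyInnerSelf, ContinuousLinearMap.sub_apply, inner_sub_left,
      RCLike.re_to_real] at h1
    have h2 : ⟪U x, x⟫ ≤ ‖U x‖ * ‖x‖ := real_inner_le_norm _ _
    have h3 : ‖U x‖ * ‖x‖ ≤ (‖U‖ * ‖x‖) * ‖x‖ :=
      mul_le_mul_of_nonneg_right (U.le_opNorm x) (norm_nonneg x)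
    nlinarith
  set C := Real.sqrt (‖T‖ * ‖U‖) with hCdef
  have hC0 : 0 ≤ C := Real.sqrt_nonneg _
  have hC2 : C * C = ‖T‖ * ‖U‖ :=
    Real.mul_self_sqrt (mul_nonneg (norm_nonneg _) (norm_nonneg _))
  have hbound : ∀ x : E, ‖T x‖ ≤ C * ‖x‖ := by
    intro x
    have hcs := aux_cs hT x (T x)
    have he : ⟪T x, T x⟫ = ‖T x‖ * ‖T x‖ := real_inner_self_eq_norm_mul_norm _
    have h4 : ⟪T (T x), T x⟫ ≤ ‖T‖ * (‖T x‖ * ‖T x‖) := by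
      have := real_inner_le_norm (T (T x)) (T x)
      have h5 : ‖T (T x)‖ ≤ ‖T‖ * ‖T x‖ := T.le_opNorm _
      nlinarith [norm_nonneg (T x)]
    have h6 : ⟪T x, x⟫ ≤ ‖U‖ * (‖x‖ * ‖x‖) := hinner x
    have hTx0 : (0:ℝ) ≤ ⟪T (T x), T x⟫ := by
      simpa [reApplyInnerSelf] using hT.inner_nonneg_left (T x)
    have hTxx0 : (0:ℝ) ≤ ⟪T x, x⟫ := by
      simpa [reApplyInnerSelf] using hT.inner_nonneg_left x
    have h7 : (‖T x‖ * ‖T x‖) * (‖T x‖ * ‖T x‖) ≤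
        ((‖T‖ * ‖U‖) * (‖x‖ * ‖x‖)) * (‖T x‖ * ‖T x‖) := by
      nlinarith [sq_nonneg (‖T x‖), norm_nonneg T, norm_nonneg U, norm_nonneg x,
        norm_nonneg (T x)]
    rcases eq_or_lt_of_le (norm_nonneg (T x)) with h0 | h0
    · rw [← h0]; positivity
    · have h8 : ‖T x‖ * ‖T x‖ ≤ (‖T‖ * ‖U‖) * (‖x‖ * ‖x‖) :=
        le_of_mul_le_mul_right (by linarith [h7]) (mul_pos h0 h0)
      nlinarith [norm_nonneg (T x), norm_nonneg x, mul_nonneg hC0 (norm_nonneg x)]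
  have hTC : ‖T‖ ≤ C := T.opNorm_le_bound hC0 hbound
  nlinarith [norm_nonneg T, norm_nonneg U]

private lemma posSemidef_isPositive {m : Type*} [Fintype m] [DecidableEq m]
    {M : Matrix m m ℝ} (hM : M.PosSemidef) :
    (Matrix.toEuclideanCLM (𝕜 := ℝ) M).IsPositive := by
  constructor
  · exact (Matrix.isPositive_toEuclideanLin_iff.mpr hM).1
  · intro x
    have h := hM.dotProduct_mulVec_nonneg ((WithLp.equiv 2 (m → ℝ)) x)
    simp only [reApplyInnerSelf, RCLike.re_to_real]
    have happ : ∀ i, (Matrix.toEuclideanCLM (𝕜 := ℝ) M x) i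
        = (M *ᵥ (WithLp.equiv 2 (m → ℝ)) x) i := fun i => rfl
    rw [PiLp.inner_apply]
    simp only [RCLike.inner_apply, starRingEnd_apply, star_trivial] at *
    calc (0:ℝ) ≤ star ((WithLp.equiv 2 (m → ℝ)) x) ⬝ᵥ (M *ᵥ (WithLp.equiv 2 (m → ℝ)) x) := h
      _ = ∑ i, x i * (Matrix.toEuclideanCLM (𝕜 := ℝ) M x) i := by
          rw [dotProduct]
          refine Finset.sum_congr rfl fun i _ => ?_
          rw [happ i]
          rfl

end AuxLemmas

/-- Operator (spectral) norm of a real square matrix, i.e. the norm of the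
associated operator on Euclidean space. -/
noncomputable def opNorm {m : Type*} [Fintype m] [DecidableEq m]
    (M : Matrix m m ℝ) : ℝ :=
  ‖Matrix.toEuclideanCLM (𝕜 := ℝ) M‖

private lemma opNorm_orth {m : Type*} [Fintype m] [DecidableEq m]
    {M : Matrix m m ℝ} (hM : Mᵀ * M = 1) : opNorm M ≤ 1 := by
  have hsq : ‖Matrix.toEuclideanCLM (𝕜 := ℝ) M‖ * ‖Matrix.toEuclideanCLM (𝕜 := ℝ) M‖
      = ‖star (Matrix.toEuclideanCLM (𝕜 := ℝ) M) * Matrix.toEuclideanCLM (𝕜 := ℝ) M‖ :=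
    (CStarRing.norm_star_mul_self).symm
  have hstar : star (Matrix.toEuclideanCLM (𝕜 := ℝ) M) * Matrix.toEuclideanCLM (𝕜 := ℝ) M
      = 1 := by
    rw [← map_star, ← _root_.map_mul, Matrix.star_eq_conjTranspose,
      Matrix.conjTranspose_eq_transpose_of_trivial, hM, _root_.map_one]
  rw [hstar] at hsq
  have hone : ‖(1 : EuclideanSpace ℝ m →L[ℝ] EuclideanSpace ℝ m)‖ ≤ 1 := by
    rw [ContinuousLinearMap.one_def]
    exact ContinuousLinearMap.norm_id_le
  have h0 : (0:ℝ) ≤ ‖Matrix.toEuclideanCLM (𝕜 := ℝ) M‖ := norm_nonneg _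
  unfold opNorm
  nlinarith

set_option maxHeartbeats 1000000 in
set_option synthInstance.maxHeartbeats 400000 in
/-- If Sig is symmetric positive definite with Williamson decomposition
Sig = S D Sᵀ, S symplectic and D = diag(ν,ν) with ν ≥ 1/2, then
Sig⁻¹ ≤ 4 Ω Sig Ωᵀ in the Loewner order and ‖Sig⁻¹‖_op ≤ 4 ‖Sig‖_op,
where Ω = [[0, I],[−I, 0]] is the standard symplectic form. -/
theorem williamson_inv_le (n : ℕ) (Sig : Matrix (Fin n ⊕ Fin n) (Fin n ⊕ Fin n) ℝ)
    (Ω : Matrix (Fin n ⊕ Fin n) (Fin n ⊕ Fin n) ℝ)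
    (hΩ : Ω = Matrix.fromBlocks 0 1 (-1) 0)
    (hSig : Sig.PosDef)
    (hW : ∃ (S : Matrix (Fin n ⊕ Fin n) (Fin n ⊕ Fin n) ℝ) (ν : Fin n → ℝ),
      S * Ω * Sᵀ = Ω ∧ (∀ i, (1:ℝ)/2 ≤ ν i) ∧
      Sig = S * Matrix.diagonal (Sum.elim ν ν) * Sᵀ) :
    ((4 : ℝ) • (Ω * Sig * Ωᵀ) - Sig⁻¹).PosSemidef ∧
      opNorm Sig⁻¹ ≤ 4 * opNorm Sig := by
  obtain ⟨S, ν, hS, hν, hdec⟩ := hW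
  have hν0 : ∀ i, 0 < ν i := fun i => lt_of_lt_of_le (by norm_num) (hν i)
  set D : Matrix (Fin n ⊕ Fin n) (Fin n ⊕ Fin n) ℝ := Matrix.diagonal (Sum.elim ν ν) with hD
  set Dm : Matrix (Fin n ⊕ Fin n) (Fin n ⊕ Fin n) ℝ :=
    Matrix.diagonal (Sum.elim (fun i => (ν i)⁻¹) (fun i => (ν i)⁻¹)) with hDm
  have hΩT : Ωᵀ = Matrix.fromBlocks 0 (-1) 1 0 := by
    rw [hΩ, Matrix.fromBlocks_transpose]
    simp
  have h1 : Ω * Ωᵀ = 1 := by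
    rw [hΩT, hΩ, Matrix.fromBlocks_multiply]
    simp [← Matrix.fromBlocks_one]
  have h2 : Ωᵀ * Ω = 1 := mul_eq_one_comm.mp h1
  have hcomm : ∀ a : Fin n → ℝ,
      Ω * Matrix.diagonal (Sum.elim a a) = Matrix.diagonal (Sum.elim a a) * Ω := by
    intro a
    rw [hΩ, ← Matrix.fromBlocks_diagonal, Matrix.fromBlocks_multiply,
      Matrix.fromBlocks_multiply]
    simp
  have hDDm : D * Dm = 1 := by
    rw [hD, hDm, Matrix.diagonal_mul_diagonal]
    have hfun : (fun i => (Sum.elim ν ν) i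
        * ((Sum.elim (fun i => (ν i)⁻¹) (fun i => (ν i)⁻¹))) i)
        = fun _ : Fin n ⊕ Fin n => (1:ℝ) := by
      funext i; rcases i with i | i <;> exact mul_inv_cancel₀ (hν0 i).ne'
    rw [hfun, Matrix.diagonal_one]
  have h3 : S * (Ω * Sᵀ * Ωᵀ) = 1 := by
    rw [← Matrix.mul_assoc, ← Matrix.mul_assoc, hS, h1]
  have h4 : Ω * Sᵀ * Ωᵀ * S = 1 :=
    mul_eq_one_comm.mp (by rw [← Matrix.mul_assoc] at h3 ⊢; exact h3)
  have h5 : Sᵀ * Ωᵀ * S = Ωᵀ := by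
    calc Sᵀ * Ωᵀ * S = Ωᵀ * Ω * (Sᵀ * Ωᵀ * S) := by rw [h2, one_mul]
      _ = Ωᵀ * (Ω * Sᵀ * Ωᵀ * S) := by noncomm_ring
      _ = Ωᵀ := by rw [h4, mul_one]
  have hsymp2 : Sᵀ * Ω * S = Ω := by
    have := congrArg Matrix.transpose h5
    simpa [Matrix.transpose_mul, Matrix.mul_assoc] using this
  have hSinv : Sig * ((Ω * S) * Dm * (Ω * S)ᵀ) = 1 := by
    have f1 : ∀ X, Sᵀ * (Ω * (S * X)) = Ω * X := by
      intro X
      calc Sᵀ * (Ω * (S * X)) = (Sᵀ * Ω * S) * X := by noncomm_ring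
        _ = Ω * X := by rw [hsymp2]
    have f2 : ∀ X, D * (Ω * X) = Ω * (D * X) := by
      intro X
      calc D * (Ω * X) = (D * Ω) * X := by noncomm_ring
        _ = (Ω * D) * X := by rw [hcomm]
        _ = Ω * (D * X) := by noncomm_ring
    have f3 : ∀ X, D * (Dm * X) = X := by
      intro X
      calc D * (Dm * X) = (D * Dm) * X := by noncomm_ring
        _ = X := by rw [hDDm, one_mul]
    calc Sig * ((Ω * S) * Dm * (Ω * S)ᵀ)
        = S * (D * (Sᵀ * (Ω * (S * (Dm * (Sᵀ * Ωᵀ)))))) := by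
          rw [hdec, Matrix.transpose_mul]
          noncomm_ring
      _ = S * (D * (Ω * (Dm * (Sᵀ * Ωᵀ)))) := by rw [f1]
      _ = S * (Ω * (D * (Dm * (Sᵀ * Ωᵀ)))) := by rw [f2]
      _ = S * (Ω * (Sᵀ * Ωᵀ)) := by rw [f3]
      _ = (S * Ω * Sᵀ) * Ωᵀ := by noncomm_ring
      _ = 1 := by rw [hS, h1]
  have hSiginv : Sig⁻¹ = (Ω * S) * Dm * (Ω * S)ᵀ := Matrix.inv_eq_right_inv hSinv
  have hE : (4 : ℝ) • (Ω * Sig * Ωᵀ) - Sig⁻¹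
      = (Ω * S) * ((4:ℝ) • D - Dm) * (Ω * S)ᵀ := by
    rw [hSiginv, hdec, Matrix.mul_sub, Matrix.sub_mul, Matrix.transpose_mul]
    rw [Matrix.mul_smul, Matrix.smul_mul]
    congr 1
    noncomm_ring
  have hpos : ((4:ℝ) • D - Dm).PosSemidef := by
    rw [hD, hDm, ← Matrix.diagonal_smul, Matrix.diagonal_sub]
    refine Matrix.posSemidef_diagonal_iff.mpr fun i => ?_
    rcases i with i | i <;>
    · have h := hν i
      have h0 := hν0 i
      have hmul := mul_inv_cancel₀ (ne_of_gt h0)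
      simp only [Pi.sub_apply, Pi.smul_apply, Sum.elim_inl, Sum.elim_inr, smul_eq_mul]
      nlinarith [sq_nonneg (2 * ν i - 1)]
  have hmain : ((4 : ℝ) • (Ω * Sig * Ωᵀ) - Sig⁻¹).PosSemidef := by
    rw [hE]
    have := hpos.mul_mul_conjTranspose_same (Ω * S)
    rwa [Matrix.conjTranspose_eq_transpose_of_trivial] at this
  refine ⟨hmain, ?_⟩
  -- norm part
  have hinvPD : (Sig⁻¹).PosDef := hSig.inv
  have hT1 := posSemidef_isPositive hinvPD.posSemidef
  have hdiff : ((Matrix.toEuclideanCLM (𝕜 := ℝ) ((4 : ℝ) • (Ω * Sig * Ωᵀ)))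
      - Matrix.toEuclideanCLM (𝕜 := ℝ) Sig⁻¹).IsPositive := by
    rw [← _root_.map_sub (Matrix.toEuclideanCLM (n := Fin n ⊕ Fin n) (𝕜 := ℝ))]
    exact posSemidef_isPositive hmain
  have hle : opNorm Sig⁻¹ ≤ ‖Matrix.toEuclideanCLM (𝕜 := ℝ) ((4 : ℝ) • (Ω * Sig * Ωᵀ))‖ :=
    isPositive_norm_le hT1 hdiff
  have hsmul : ‖Matrix.toEuclideanCLM (𝕜 := ℝ) ((4 : ℝ) • (Ω * Sig * Ωᵀ))‖
      = 4 * opNorm (Ω * Sig * Ωᵀ) := by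
    rw [_root_.map_smul]
    rw [norm_smul (4:ℝ) (Matrix.toEuclideanCLM (n := Fin n ⊕ Fin n) (𝕜 := ℝ) (Ω * Sig * Ωᵀ))]
    norm_num [opNorm]
  have hΩ1 : opNorm Ω ≤ 1 := opNorm_orth (by
    have := congrArg Matrix.transpose h1
    rw [Matrix.transpose_mul, Matrix.transpose_transpose, Matrix.transpose_one] at this
    exact h2)
  have hΩT1 : opNorm Ωᵀ ≤ 1 := opNorm_orth (by rwa [Matrix.transpose_transpose])
  have hprod : opNorm (Ω * Sig * Ωᵀ) ≤ opNorm Ω * opNorm Sig * opNorm Ωᵀ := by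
    unfold opNorm
    rw [_root_.map_mul, _root_.map_mul]
    exact le_trans (norm_mul_le _ _)
      (mul_le_mul_of_nonneg_right (norm_mul_le _ _) (norm_nonneg _))
  have hSig0 : 0 ≤ opNorm Sig := norm_nonneg _
  have hΩ0 : 0 ≤ opNorm Ω := norm_nonneg _
  have hΩT0 : 0 ≤ opNorm Ωᵀ := norm_nonneg _
  have hstep1 : opNorm Ω * opNorm Sig ≤ opNorm Sig :=
    mul_le_of_le_one_left hSig0 hΩ1
  have hstep2 : opNorm Ω * opNorm Sig * opNorm Ωᵀ ≤ opNorm Ω * opNorm Sig :=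
    mul_le_of_le_one_right (mul_nonneg hΩ0 hSig0) hΩT1
  calc opNorm Sig⁻¹ ≤ 4 * opNorm (Ω * Sig * Ωᵀ) := by rw [← hsmul]; exact hle
    _ ≤ 4 * opNorm Sig := by linarith
end

section
/- Every 2×2 real symmetric positive definite matrix V has a unique symplectic eigenvalue, equal to sqrt(det V); i.e., there exists a 2×2 real symplectic matrix S (satisfying S J Sᵀ = J for J = [[0,1],[−1,0]]) with V = S · (sqrt(det V)·I₂) · Sᵀ. -/
open Matrix

set_option maxHeartbeats 1000000 in
/-- Every 2×2 real symmetric positive definite matrix V has symplectic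
eigenvalue √(det V): there is a real symplectic S (S J Sᵀ = J for
J = [[0,1],[−1,0]]) with V = S · (√(det V)·I₂) · Sᵀ. -/
theorem williamson_two_dim (V : Matrix (Fin 2) (Fin 2) ℝ)
    (hV : V.PosDef) :
    ∃ S : Matrix (Fin 2) (Fin 2) ℝ,
      S * !![(0:ℝ), 1; -1, 0] * Sᵀ = !![(0:ℝ), 1; -1, 0] ∧
      V = S * (Real.sqrt V.det • (1 : Matrix (Fin 2) (Fin 2) ℝ)) * Sᵀ := by
  set a : ℝ := V 0 0 with ha
  set b : ℝ := V 0 1 with hb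
  set c : ℝ := V 1 1 with hc
  have hsym : V 1 0 = b := by
    have := congrFun (congrFun hV.1 0) 1
    simpa [Matrix.conjTranspose_apply, hb] using this
  have hdetpos : 0 < V.det := hV.det_pos
  have hdet : V.det = a * c - b * b := by
    rw [Matrix.det_fin_two, hsym]
  set d : ℝ := Real.sqrt V.det with hdd
  have hd_pos : 0 < d := Real.sqrt_pos.mpr hdetpos
  have hd2 : d * d = a * c - b * b := by
    rw [← hdet, hdd]; exact Real.mul_self_sqrt hdetpos.le
  have hapos : 0 < a := by
    have := hV.dotProduct_mulVec_pos (x := Pi.single 0 1) (by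
      intro h
      have := congrFun h 0
      simp at this)
    simpa [Matrix.mulVec, dotProduct, Fin.sum_univ_two, ← ha] using this
  have hcpos : 0 < c := by
    have := hV.dotProduct_mulVec_pos (x := Pi.single 1 1) (by
      intro h
      have := congrFun h 1
      simp at this)
    simpa [Matrix.mulVec, dotProduct, Fin.sum_univ_two, ← hc] using this
  have ht : 0 < d * (a + c + 2 * d) := by positivity
  set k : ℝ := Real.sqrt (d * (a + c + 2 * d)) with hk
  have hkpos : 0 < k := Real.sqrt_pos.mpr ht
  have hk2 : k * k = d * (a + c + 2 * d) := Real.mul_self_sqrt ht.le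
  have hkne : k ≠ 0 := hkpos.ne'
  refine ⟨!![(a + d) / k, b / k; b / k, (c + d) / k], ?_, ?_⟩ <;>
    rw [show (!![(a + d) / k, b / k; b / k, (c + d) / k])ᵀ
        = !![(a + d) / k, b / k; b / k, (c + d) / k] from by
      ext i j; fin_cases i <;> fin_cases j <;> rfl]
  · ext i j
    fin_cases i <;> fin_cases j <;>
      simp [Matrix.mul_apply, Fin.sum_univ_two] <;>
      field_simp <;> nlinarith [hk2, hd2]
  · have hVij : V = !![a, b; b, c] := by
      ext i j
      fin_cases i <;> fin_cases j <;> simp [ha, hb, hc, hsym]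
    rw [hVij]
    ext i j
    fin_cases i <;> fin_cases j <;>
      simp [Matrix.mul_apply, Fin.sum_univ_two, Matrix.smul_apply,
        Matrix.one_apply, ← hdd] <;>
      field_simp <;> first
      | linear_combination b * hk2
      | nlinarith [hk2, hd2, hd_pos, hkpos]
end

section
/- For all real a, b > 0, (1/π) · ∫₀^π [a·b·(a + b·cos²φ + b⁻¹·sin²φ)] / [(a + b)² + (a² − 1)(b² − 1)·sin²φ] dφ = a/(1 + a). -/
open Real MeasureTheory

set_option maxHeartbeats 1000000 in
/-- For a, b > 0:
(1/π)·∫₀^π [ab(a + b cos²φ + b⁻¹ sin²φ)] / [(a+b)² + (a²−1)(b²−1) sin²φ] dφ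
  = a/(1+a). -/
theorem homodyne_angle_average (a b : ℝ) (ha : 0 < a) (hb : 0 < b) :
    (1 / π) * ∫ φ in (0:ℝ)..π,
        (a * b * (a + b * (Real.cos φ) ^ 2 + b⁻¹ * (Real.sin φ) ^ 2)) /
          ((a + b) ^ 2 + (a ^ 2 - 1) * (b ^ 2 - 1) * (Real.sin φ) ^ 2)
      = a / (1 + a) := by
  have hπ : (0:ℝ) < π := pi_pos
  have hab : 0 < a + b := by linarith
  have hD : ∀ φ : ℝ, 0 < (a + b) ^ 2 + (a ^ 2 - 1) * (b ^ 2 - 1) * (Real.sin φ) ^ 2 := by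
    intro φ
    have h := sin_sq_add_cos_sq φ
    have h1 : 0 < (a+b)^2 := by positivity
    have h2 : 0 < (a*b+1)^2 := by positivity
    have hDeq : (a+b)^2 + (a^2-1)*(b^2-1)*(Real.sin φ)^2
        = (a+b)^2*(Real.cos φ)^2 + (a*b+1)^2*(Real.sin φ)^2 := by
      linear_combination (-(a+b)^2) * h
    rw [hDeq]
    by_cases hs : Real.sin φ = 0
    · have hc : (Real.cos φ)^2 = 1 := by rw [hs] at h; simpa using h
      rw [hs, hc]; simpa using h1
    · have hs2 : 0 < (Real.sin φ)^2 := by positivity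
      nlinarith [mul_pos h2 hs2, mul_nonneg h1.le (sq_nonneg (Real.cos φ))]
  set f : ℝ → ℝ := fun φ =>
      (a * b * (a + b * (Real.cos φ) ^ 2 + b⁻¹ * (Real.sin φ) ^ 2)) /
        ((a + b) ^ 2 + (a ^ 2 - 1) * (b ^ 2 - 1) * (Real.sin φ) ^ 2) with hf
  have hfc : Continuous f := by
    apply Continuous.div (by continuity) (by continuity) (fun x => (hD x).ne')
  have hint : IntervalIntegrable f volume 0 π := hfc.intervalIntegrable _ _
  suffices hI : ∫ φ in (0:ℝ)..π, f φ = π * (a/(1+a)) by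
    rw [hI]; field_simp
  rcases eq_or_ne a 1 with rfl | ha1
  · -- a = 1
    set F : ℝ → ℝ := fun φ =>
      (b*φ + b^2*(φ/2 + Real.sin φ*Real.cos φ/2) + (φ/2 - Real.sin φ*Real.cos φ/2))/(1+b)^2
      with hF
    have key : ∀ φ ∈ Set.uIcc (0:ℝ) π, HasDerivAt F (f φ) φ := by
      intro φ _
      have hsc : HasDerivAt (fun x => Real.sin x * Real.cos x)
          (Real.cos φ * Real.cos φ + Real.sin φ * (-Real.sin φ)) φ :=
        (Real.hasDerivAt_sin φ).mul (Real.hasDerivAt_cos φ)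
      have hid : HasDerivAt (fun x : ℝ => x) 1 φ := hasDerivAt_id φ
      have hA : HasDerivAt (fun x : ℝ => b * x) (b * 1) φ := hid.const_mul b
      have hB : HasDerivAt (fun x : ℝ => b^2 * (x/2 + Real.sin x * Real.cos x/2))
          (b^2 * (1/2 + (Real.cos φ * Real.cos φ + Real.sin φ * (-Real.sin φ))/2)) φ :=
        ((hid.div_const 2).add (hsc.div_const 2)).const_mul (b^2)
      have hC : HasDerivAt (fun x : ℝ => x/2 - Real.sin x * Real.cos x/2)
          (1/2 - (Real.cos φ * Real.cos φ + Real.sin φ * (-Real.sin φ))/2) φ :=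
        (hid.div_const 2).sub (hsc.div_const 2)
      have h1 : HasDerivAt F
          ((b*1 + b^2*(1/2 + (Real.cos φ * Real.cos φ + Real.sin φ * (-Real.sin φ))/2)
            + (1/2 - (Real.cos φ * Real.cos φ + Real.sin φ * (-Real.sin φ))/2))/(1+b)^2) φ :=
        ((hA.add hB).add hC).div_const ((1+b)^2)
      convert h1 using 1
      have h := sin_sq_add_cos_sq φ
      rw [hf]
      have h1b : (1+b) ≠ 0 := by positivity
      field_simp
      linear_combination ((1+b)^2*(b^2+1)) * h
    rw [intervalIntegral.integral_eq_sub_of_hasDerivAt key hint, hF]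
    simp [Real.sin_pi]
    have h1b : (1+b) ≠ 0 := by positivity
    field_simp
    ring
  · -- a ≠ 1
    have ha1' : a + 1 ≠ 0 := by positivity
    have ha1'' : a - 1 ≠ 0 := sub_ne_zero.mpr ha1
    have ha2 : a^2 - 1 ≠ 0 := by
      intro hc; apply ha1''; nlinarith [sq_nonneg (a+1)]
    have hM : ∀ φ : ℝ, 0 < (a+b)*Real.cos φ^2 + (a*b+1)*Real.sin φ^2 := by
      intro φ
      have h := sin_sq_add_cos_sq φ
      by_cases hs : Real.sin φ = 0
      · have hc : (Real.cos φ)^2 = 1 := by rw [hs] at h; simpa using h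
        rw [hs, hc]; simpa using hab
      · have hs2 : 0 < (Real.sin φ)^2 := by positivity
        have hq : 0 < a*b+1 := by positivity
        nlinarith [mul_pos hq hs2, mul_nonneg hab.le (sq_nonneg (Real.cos φ))]
    set u : ℝ → ℝ := fun x =>
      (a-1)*(b-1)*(Real.sin x * Real.cos x) / ((a+b)*Real.cos x^2 + (a*b+1)*Real.sin x^2)
      with hu
    set F : ℝ → ℝ := fun x => a/(a+1)*x + a^2/(a^2-1) * Real.arctan (u x) with hF
    have key : ∀ φ ∈ Set.uIcc (0:ℝ) π, HasDerivAt F (f φ) φ := by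
      intro φ _
      have hnum : HasDerivAt (fun x => (a-1)*(b-1)*(Real.sin x * Real.cos x))
          ((a-1)*(b-1)*(Real.cos φ * Real.cos φ + Real.sin φ * (-Real.sin φ))) φ :=
        ((Real.hasDerivAt_sin φ).mul (Real.hasDerivAt_cos φ)).const_mul _
      have hdend : HasDerivAt (fun x => (a+b)*Real.cos x^2 + (a*b+1)*Real.sin x^2)
          ((a+b)*(2*Real.cos φ*(-Real.sin φ)) + (a*b+1)*(2*Real.sin φ*Real.cos φ)) φ := by
        have h0 := (((Real.hasDerivAt_cos φ).pow 2).const_mul (a+b)).add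
          (((Real.hasDerivAt_sin φ).pow 2).const_mul (a*b+1))
        refine h0.congr_deriv ?_
        push_cast; ring
      have hud : HasDerivAt u
          (((a-1)*(b-1)*(Real.cos φ * Real.cos φ + Real.sin φ * (-Real.sin φ))
              * ((a+b)*Real.cos φ^2 + (a*b+1)*Real.sin φ^2)
            - (a-1)*(b-1)*(Real.sin φ * Real.cos φ)
              * ((a+b)*(2*Real.cos φ*(-Real.sin φ)) + (a*b+1)*(2*Real.sin φ*Real.cos φ)))
            / ((a+b)*Real.cos φ^2 + (a*b+1)*Real.sin φ^2)^2) φ :=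
        hnum.div hdend (hM φ).ne'
      have harc : HasDerivAt (fun x => Real.arctan (u x))
          ((1/(1 + u φ^2)) * (((a-1)*(b-1)*(Real.cos φ * Real.cos φ + Real.sin φ * (-Real.sin φ))
              * ((a+b)*Real.cos φ^2 + (a*b+1)*Real.sin φ^2)
            - (a-1)*(b-1)*(Real.sin φ * Real.cos φ)
              * ((a+b)*(2*Real.cos φ*(-Real.sin φ)) + (a*b+1)*(2*Real.sin φ*Real.cos φ)))
            / ((a+b)*Real.cos φ^2 + (a*b+1)*Real.sin φ^2)^2)) φ :=
        (Real.hasDerivAt_arctan (u φ)).comp φ hud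
      have h1 : HasDerivAt F
          (a/(a+1)*1 + a^2/(a^2-1) *
            ((1/(1 + u φ^2)) * (((a-1)*(b-1)*(Real.cos φ * Real.cos φ + Real.sin φ * (-Real.sin φ))
              * ((a+b)*Real.cos φ^2 + (a*b+1)*Real.sin φ^2)
            - (a-1)*(b-1)*(Real.sin φ * Real.cos φ)
              * ((a+b)*(2*Real.cos φ*(-Real.sin φ)) + (a*b+1)*(2*Real.sin φ*Real.cos φ)))
            / ((a+b)*Real.cos φ^2 + (a*b+1)*Real.sin φ^2)^2))) φ :=
        ((hasDerivAt_id φ).const_mul (a/(a+1))).add (harc.const_mul (a^2/(a^2-1)))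
      convert h1 using 1
      have h := sin_sq_add_cos_sq φ
      simp only [hf, hu]
      set s := Real.sin φ with hsdef
      set c := Real.cos φ with hcdef
      have h5 : b ≠ 0 := hb.ne'
      have h6 : (a+b)*c^2 + (a*b+1)*s^2 ≠ 0 := (hM φ).ne'
      have h7 : (a+b)^2 + (a^2-1)*(b^2-1)*s^2 ≠ 0 := (hD φ).ne'
      have hu2 : 1 + ((a-1)*(b-1)*(s*c)/((a+b)*c^2 + (a*b+1)*s^2))^2 = ((a+b)^2 + (a^2-1)*(b^2-1)*s^2) / ((a+b)*c^2 + (a*b+1)*s^2)^2 := by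
        rw [div_pow, eq_div_iff (pow_ne_zero 2 h6), add_mul, div_mul_cancel₀ _ (pow_ne_zero 2 h6)]
        linear_combination ((a+b)^2*c^2 + (a*b+1)^2*s^2 + (a+b)^2) * h
      rw [hu2]
      field_simp
      have hc2 : c^2 = 1 - s^2 := by linear_combination h
      rw [hc2]
      obtain ⟨M, hMdef⟩ : ∃ M, M = (1 - s^2)*(a+b) + s^2*(a*b+1) := ⟨_, rfl⟩
      obtain ⟨D, hDdef⟩ : ∃ D, D = (a+b)^2 + s^2*(a^2-1)*(b^2-1) := ⟨_, rfl⟩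
      have hM0 : M ≠ 0 := by rw [hMdef, ← hc2]; convert h6 using 1; ring
      have hD0 : D ≠ 0 := by rw [hDdef]; convert h7 using 1; ring
      rw [← hMdef, ← hDdef]
      field_simp
      rw [hMdef, hDdef]
      ring
    rw [intervalIntegral.integral_eq_sub_of_hasDerivAt key hint, hF, hu]
    simp [Real.sin_pi]
    field_simp
    ring
end
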